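/- Let n, d, q be natural numbers with q ≥ 1, let P ∈ MvPolynomial (Fin n) ℤ satisfy degreeOf i P ≤ d for all i, and let a : Fin n → ℤ satisfy eval a P ≠ 0. Let Z be the finite set of points b : Fin n → ℤ lying in the grid S_q^n with eval b P = 0. Then there exists an injection from Z into Fin n × Fin d × (Fin (n−1) → Fin q); in particular, the cardinality of Z is at most n · d · q^(n−1). -/

import Mathlib

open MvPolynomial

open Finset in
lemma sz_count (d q : ℕ) : ∀ (n : ℕ) (P : MvPolynomial (Fin n) ℤ), P ≠ 0 →
    (∀ i, P.degreeOf i ≤ d) →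
    ((Fintype.piFinset fun _ : Fin n => Finset.Ico (0:ℤ) (q:ℤ)).filter
      (fun b => eval b P = 0)).card ≤ n * d * q ^ (n - 1) := by
  intro n
  induction n with
  | zero =>
    intro P hP hdeg
    have h : ∀ b : Fin 0 → ℤ, eval b P ≠ 0 := by
      intro b h0
      have hPC : P = C (constantCoeff P) := (MvPolynomial.eq_C_of_isEmpty P)
      rw [hPC, eval_C] at h0
      exact hP (by rw [hPC, h0, map_zero])
    simp only [Nat.zero_mul, Nat.le_zero, Finset.card_eq_zero]
    exact Finset.filter_false_of_mem (fun b _ => h b)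
  | succ n ih =>
    intro P hP hdeg
    set F := finSuccEquiv ℤ n P with hFdef
    have hF0 : F ≠ 0 := fun h => hP ((finSuccEquiv ℤ n).injective (by simp [← hFdef, h]))
    have hk : F.natDegree ≤ d := by
      rw [hFdef, natDegree_finSuccEquiv]; exact hdeg 0
    set L := F.leadingCoeff with hLdef
    have hL0 : L ≠ 0 := Polynomial.leadingCoeff_ne_zero.2 hF0
    have hLdeg : ∀ j : Fin n, L.degreeOf j ≤ d := fun j =>
      le_trans (degreeOf_coeff_finSuccEquiv P j F.natDegree) (hdeg j.succ)
    set T := Fintype.piFinset fun _ : Fin n => Finset.Ico (0:ℤ) (q:ℤ) with hT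
    set I := Finset.Ico (0:ℤ) (q:ℤ) with hI
    have hIcard : I.card = q := by simp [hI]
    set S := (T ×ˢ I).filter (fun p : (Fin n → ℤ) × ℤ => eval (Fin.cons p.2 p.1) P = 0)
      with hS
    -- Step 1 : inject roots into S
    have step1 : ((Fintype.piFinset fun _ : Fin (n+1) => Finset.Ico (0:ℤ) (q:ℤ)).filter
        (fun b => eval b P = 0)).card ≤ S.card := by
      apply Finset.card_le_card_of_injOn (fun b => (Fin.tail b, b 0))
      · intro b hb
        replace hb : b ∈ ((Fintype.piFinset fun _ : Fin (n+1) => Finset.Ico (0:ℤ) (q:ℤ)).filter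
          (fun b => eval b P = 0)) := hb
        show _ ∈ S
        simp only [Finset.mem_filter, Fintype.mem_piFinset] at hb
        simp only [hS, hT, hI, Finset.mem_filter, Finset.mem_product, Fintype.mem_piFinset]
        refine ⟨⟨fun i => hb.1 _, hb.1 0⟩, ?_⟩
        rw [Fin.cons_self_tail]; exact hb.2
      · intro b _ b' _ h
        simp only [Prod.mk.injEq] at h
        funext i
        have := congrFun h.1
        refine Fin.cases h.2 (fun j => ?_) i
        exact this j
    -- Step 2 : fiberwise counting
    have step2 : S.card = ∑ t ∈ T, (S.filter (fun p => p.1 = t)).card := by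
      apply Finset.card_eq_sum_card_fiberwise
      intro p hp
      replace hp : p ∈ S := hp
      simp only [hS, Finset.mem_filter, Finset.mem_product] at hp
      exact hp.1.1
    -- Step 3 : per-fiber bound
    have step3 : ∀ t ∈ T, (S.filter (fun p => p.1 = t)).card ≤
        if eval t L = 0 then q else d := by
      intro t _
      have hsub : (S.filter (fun p => p.1 = t)).card ≤
          (I.filter (fun x => (F.map (eval t)).eval x = 0)).card := by
        apply Finset.card_le_card_of_injOn (fun p => p.2)
        · intro p hp
          replace hp : p ∈ S.filter (fun p => p.1 = t) := hp
          show _ ∈ I.filter (fun x => (F.map (eval t)).eval x = 0)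
          simp only [hS, Finset.mem_filter, Finset.mem_product] at hp ⊢
          obtain ⟨⟨⟨_, hpI⟩, hev⟩, hpt⟩ := hp
          refine ⟨hpI, ?_⟩
          rw [← eval_eq_eval_mv_eval', ← hpt]
          exact hev
        · intro p hp p' hp' h
          simp only [Finset.mem_coe, Finset.mem_filter] at hp hp'
          exact Prod.ext (hp.2.trans hp'.2.symm) h
      by_cases hroot : eval t L = 0
      · rw [if_pos hroot]
        calc (S.filter (fun p => p.1 = t)).card
            ≤ (I.filter (fun x => (F.map (eval t)).eval x = 0)).card := hsub
          _ ≤ I.card := Finset.card_le_card (Finset.filter_subset _ _)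
          _ = q := hIcard
      · rw [if_neg hroot]
        set G := F.map (eval t) with hG
        have hG0 : G ≠ 0 := fun h => by
          have : G.coeff F.natDegree = eval t L := by
            rw [hG, Polynomial.coeff_map]; rfl
          rw [h] at this
          exact hroot (by simpa using this.symm)
        have hsub2 : I.filter (fun x => G.eval x = 0) ⊆ G.roots.toFinset := by
          intro x hx
          simp only [Finset.mem_filter] at hx
          rw [Multiset.mem_toFinset, Polynomial.mem_roots']
          exact ⟨hG0, hx.2⟩
        calc (S.filter (fun p => p.1 = t)).card
            ≤ (I.filter (fun x => G.eval x = 0)).card := hsub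
          _ ≤ G.roots.toFinset.card := Finset.card_le_card hsub2
          _ ≤ Multiset.card G.roots := Multiset.toFinset_card_le _
          _ ≤ G.natDegree := Polynomial.card_roots' G
          _ ≤ F.natDegree := Polynomial.natDegree_map_le
          _ ≤ d := hk
    -- Step 4 : sum the bound
    have step4 : ∑ t ∈ T, (if eval t L = 0 then q else d)
        ≤ n * d * q ^ (n - 1) * q + q ^ n * d := by
      rw [← Finset.sum_filter_add_sum_filter_not T (fun t => eval t L = 0)]
      have h1 : ∑ t ∈ T.filter (fun t => eval t L = 0), (if eval t L = 0 then q else d)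
          = (T.filter (fun t => eval t L = 0)).card * q := by
        rw [Finset.sum_ite_of_true (by intro t ht; exact (Finset.mem_filter.1 ht).2),
          Finset.sum_const, smul_eq_mul]
      have h2 : ∑ t ∈ T.filter (fun t => ¬ eval t L = 0), (if eval t L = 0 then q else d)
          = (T.filter (fun t => ¬ eval t L = 0)).card * d := by
        rw [Finset.sum_ite_of_false (by intro t ht; exact (Finset.mem_filter.1 ht).2),
          Finset.sum_const, smul_eq_mul]
      rw [h1, h2]
      have hc1 : (T.filter (fun t => eval t L = 0)).card ≤ n * d * q ^ (n - 1) :=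
        ih L hL0 hLdeg
      have hc2 : (T.filter (fun t => ¬ eval t L = 0)).card ≤ q ^ n := by
        calc (T.filter (fun t => ¬ eval t L = 0)).card ≤ T.card :=
            Finset.card_le_card (Finset.filter_subset _ _)
          _ = q ^ n := by simp [hT, hIcard]
      exact Nat.add_le_add (Nat.mul_le_mul_right q hc1) (Nat.mul_le_mul_right d hc2)
    -- Combine
    have hmain : ((Fintype.piFinset fun _ : Fin (n+1) => Finset.Ico (0:ℤ) (q:ℤ)).filter
        (fun b => eval b P = 0)).card ≤ n * d * q ^ (n - 1) * q + q ^ n * d := by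
      calc _ ≤ S.card := step1
        _ = ∑ t ∈ T, (S.filter (fun p => p.1 = t)).card := step2
        _ ≤ ∑ t ∈ T, (if eval t L = 0 then q else d) := Finset.sum_le_sum step3
        _ ≤ _ := step4
    refine hmain.trans ?_
    cases n with
    | zero => simp
    | succ m =>
      simp only [Nat.succ_sub_one]
      have : q ^ m * q = q ^ (m + 1) := by ring
      calc (m+1) * d * q ^ m * q + q ^ (m+1) * d
          = ((m+1) + 1) * d * q ^ (m+1) := by ring
        _ ≤ _ := le_refl _

theorem roots_inject_into_codes (n d q : ℕ) (hq : 1 ≤ q)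
    (P : MvPolynomial (Fin n) ℤ) (hdeg : ∀ i : Fin n, P.degreeOf i ≤ d)
    (a : Fin n → ℤ) (ha : eval a P ≠ 0) :
    (∃ f : {b : Fin n → ℤ // (∀ i, 0 ≤ b i ∧ b i < (q : ℤ)) ∧ eval b P = 0} →
        Fin n × Fin d × (Fin (n - 1) → Fin q), Function.Injective f) ∧
    {b : Fin n → ℤ | (∀ i, 0 ≤ b i ∧ b i < (q : ℤ)) ∧ eval b P = 0}.ncard
      ≤ n * d * q ^ (n - 1) := by
  classical
  have hP : P ≠ 0 := fun h => ha (by rw [h, map_zero])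
  set R := ((Fintype.piFinset fun _ : Fin n => Finset.Ico (0:ℤ) (q:ℤ)).filter
      (fun b => eval b P = 0)) with hR
  have hZR : {b : Fin n → ℤ | (∀ i, 0 ≤ b i ∧ b i < (q : ℤ)) ∧ eval b P = 0} = ↑R := by
    ext b
    simp [hR, Fintype.mem_piFinset, Finset.mem_Ico, forall_and]
  have hcard : {b : Fin n → ℤ | (∀ i, 0 ≤ b i ∧ b i < (q : ℤ)) ∧ eval b P = 0}.ncard
      ≤ n * d * q ^ (n - 1) := by
    rw [hZR, Set.ncard_coe_finset]
    exact sz_count d q n P hP hdeg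
  refine ⟨?_, hcard⟩
  have hfin : {b : Fin n → ℤ | (∀ i, 0 ≤ b i ∧ b i < (q : ℤ)) ∧ eval b P = 0}.Finite := by
    rw [hZR]; exact R.finite_toSet
  have : Finite {b : Fin n → ℤ // (∀ i, 0 ≤ b i ∧ b i < (q : ℤ)) ∧ eval b P = 0} :=
    hfin.to_subtype
  have hft : Fintype {b : Fin n → ℤ // (∀ i, 0 ≤ b i ∧ b i < (q : ℤ)) ∧ eval b P = 0} :=
    Fintype.ofFinite _
  have hcards : Fintype.card {b : Fin n → ℤ // (∀ i, 0 ≤ b i ∧ b i < (q : ℤ)) ∧ eval b P = 0}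
      ≤ Fintype.card (Fin n × Fin d × (Fin (n - 1) → Fin q)) := by
    have h1 : Fintype.card {b : Fin n → ℤ // (∀ i, 0 ≤ b i ∧ b i < (q : ℤ)) ∧ eval b P = 0}
        = {b : Fin n → ℤ | (∀ i, 0 ≤ b i ∧ b i < (q : ℤ)) ∧ eval b P = 0}.ncard := by
      rw [← Nat.card_eq_fintype_card]
      exact Nat.card_coe_set_eq _
    rw [h1]
    refine hcard.trans ?_
    simp [mul_assoc]
  obtain ⟨f⟩ := Function.Embedding.nonempty_of_card_le hcards
  exact ⟨f, f.injective⟩
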